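/- Riemann–Lebesgue-type decay for Klein–Gordon oscillations: let m > 0, ω(k) = √(|k|² + m²), and let g ∈ L¹(ℝ³, ℂ). Then for every fixed z ∈ ℝ³, ∫_{ℝ³} e^{−ik·z} cos(2ω(k)t) g(k) dk → 0 and ∫_{ℝ³} e^{−ik·z} (sin(2ω(k)t)/ω(k)) g(k) dk → 0 as t → ∞. -/

import Mathlib

open Complex Filter
open scoped RealInnerProductSpace

/-- `ω(k) = √(|k|² + m²)`. -/
noncomputable def omegaKG (m : ℝ) (k : EuclideanSpace ℝ (Fin 3)) : ℝ :=
  Real.sqrt (‖k‖ ^ 2 + m ^ 2)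

section Aux
open MeasureTheory Set

lemma cosid (x : ℝ) : ((Real.cos x : ℝ) : ℂ) =
    (Complex.exp (x * I) + Complex.exp (-↑x * I)) / 2 := by
  rw [Complex.ofReal_cos, Complex.exp_mul_I, Complex.exp_mul_I, Complex.cos_neg, Complex.sin_neg]
  ring

lemma sinid (x : ℝ) : ((Real.sin x : ℝ) : ℂ) =
    (Complex.exp (x * I) - Complex.exp (-↑x * I)) / (2 * I) := by
  rw [Complex.ofReal_sin, Complex.exp_mul_I, Complex.exp_mul_I, Complex.cos_neg, Complex.sin_neg]
  field_simp [Complex.I_ne_zero]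
  ring

lemma cocompactCG : (cocompact ℝ).IsCountablyGenerated := by
  rw [cocompact_eq_atBot_atTop]; infer_instance

lemma RL1 (H : ℝ → ℂ) : Tendsto (fun t : ℝ => ∫ u : ℝ, Complex.exp (t * u * I) * H u)
    (cocompact ℝ) (nhds 0) := by
  have base := Real.tendsto_integral_exp_smul_cocompact H
  have hmap : Tendsto (fun t : ℝ => -(t / (2 * Real.pi))) (cocompact ℝ) (cocompact ℝ) := by
    rw [cocompact_eq_atBot_atTop, tendsto_sup]
    have h1 : Tendsto (fun t : ℝ => t / (2 * Real.pi)) atBot atBot :=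
      tendsto_id.atBot_div_const (by positivity)
    have h2 : Tendsto (fun t : ℝ => t / (2 * Real.pi)) atTop atTop :=
      tendsto_id.atTop_div_const (by positivity)
    exact ⟨(tendsto_neg_atBot_atTop.comp h1).mono_right le_sup_right,
      (tendsto_neg_atTop_atBot.comp h2).mono_right le_sup_left⟩
  have h := base.comp hmap
  refine h.congr fun t => ?_
  simp only [Function.comp]
  congr 1
  ext u
  rw [Circle.smul_def, Real.fourierChar_apply, smul_eq_mul]
  congr 2
  push_cast
  have hπ : (Real.pi : ℂ) ≠ 0 := by exact_mod_cast Real.pi_ne_zero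
  field_simp

lemma oneD_half (a : ℝ) (ha : 0 < a) (h : ℝ → ℂ) (hh : IntegrableOn h (Ioi 0)) :
    Tendsto (fun t : ℝ => ∫ x in Ioi (0:ℝ),
      Complex.exp (t * Real.sqrt (x ^ 2 + a ^ 2) * I) * h x) (cocompact ℝ) (nhds 0) := by
  set φ : ℝ → ℝ := fun x => Real.sqrt (x ^ 2 + a ^ 2) with hφ
  set φ' : ℝ → ℝ := fun x => x / Real.sqrt (x ^ 2 + a ^ 2) with hφ'
  have hsq : ∀ x : ℝ, (0:ℝ) < x ^ 2 + a ^ 2 := fun x => by positivity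
  have hφpos : ∀ x : ℝ, 0 < φ x := fun x => Real.sqrt_pos.2 (hsq x)
  have hφsq : ∀ x : ℝ, φ x ^ 2 = x ^ 2 + a ^ 2 := fun x => Real.sq_sqrt (hsq x).le
  have hderiv : ∀ x ∈ Ioi (0:ℝ), HasDerivWithinAt φ (φ' x) (Ioi 0) x := by
    intro x hx
    have h1 : HasDerivAt (fun x : ℝ => x ^ 2 + a ^ 2) (2 * x) x := by
      simpa using (hasDerivAt_pow 2 x).add_const (a ^ 2)
    have h2 := (Real.hasDerivAt_sqrt (hsq x).ne').comp x h1
    have : (1 / (2 * Real.sqrt (x ^ 2 + a ^ 2))) * (2 * x) = φ' x := by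
      rw [hφ']; field_simp
    exact (this ▸ h2).hasDerivWithinAt
  have hmono : StrictMonoOn φ (Ioi 0) := by
    intro x hx y hy hxy
    exact Real.sqrt_lt_sqrt (hsq x).le (by nlinarith [mem_Ioi.1 hx, mem_Ioi.1 hy])
  have hinj : InjOn φ (Ioi 0) := hmono.injOn
  have himg : φ '' Ioi 0 = Ioi a := by
    ext u
    constructor
    · rintro ⟨x, hx, rfl⟩
      have hx' : (0:ℝ) < x := hx
      have : a = Real.sqrt (a ^ 2) := (Real.sqrt_sq ha.le).symm
      rw [mem_Ioi, this]
      exact Real.sqrt_lt_sqrt (by positivity) (by nlinarith)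
    · intro hu
      have hu' : a < u := hu
      have hpos : (0:ℝ) < u ^ 2 - a ^ 2 := by nlinarith
      refine ⟨Real.sqrt (u ^ 2 - a ^ 2), mem_Ioi.2 (Real.sqrt_pos.2 hpos), ?_⟩
      show Real.sqrt (Real.sqrt (u ^ 2 - a ^ 2) ^ 2 + a ^ 2) = u
      rw [Real.sq_sqrt hpos.le]
      rw [show u ^ 2 - a ^ 2 + a ^ 2 = u ^ 2 by ring, Real.sqrt_sq (ha.trans hu').le]
  set H₀ : ℝ → ℂ := fun u => ((u / Real.sqrt (u ^ 2 - a ^ 2) : ℝ) : ℂ) * h (Real.sqrt (u ^ 2 - a ^ 2)) with hH₀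
  -- key pointwise identity
  have hback : ∀ x ∈ Ioi (0:ℝ), Real.sqrt (φ x ^ 2 - a ^ 2) = x := by
    intro x hx
    rw [hφsq, show x ^ 2 + a ^ 2 - a ^ 2 = x ^ 2 by ring, Real.sqrt_sq (le_of_lt hx)]
  have hkey : ∀ x ∈ Ioi (0:ℝ), |φ' x| • H₀ (φ x) = h x := by
    intro x hx
    have hx' : (0:ℝ) < x := hx
    rw [hH₀]
    simp only [hback x hx]
    rw [abs_of_pos (by exact div_pos hx' (hφpos x))]
    rw [Complex.real_smul, ← mul_assoc, ← Complex.ofReal_mul,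
      show x / Real.sqrt (x ^ 2 + a ^ 2) * (φ x / x) = 1 by
        rw [hφ]; field_simp,
      Complex.ofReal_one, one_mul]
  set H : ℝ → ℂ := indicator (Ioi a) H₀ with hH
  have hHint : Integrable H := by
    rw [hH, integrable_indicator_iff measurableSet_Ioi, ← himg,
      integrableOn_image_iff_integrableOn_abs_deriv_smul measurableSet_Ioi hderiv hinj]
    exact hh.congr_fun (fun x hx => (hkey x hx).symm) measurableSet_Ioi
  have hint_eq : ∀ t : ℝ, (∫ x in Ioi (0:ℝ), Complex.exp (t * φ x * I) * h x)
      = ∫ u : ℝ, Complex.exp (t * u * I) * H u := by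
    intro t
    have step1 : (∫ x in Ioi (0:ℝ), Complex.exp (t * φ x * I) * h x)
        = ∫ x in Ioi (0:ℝ), |φ' x| • (Complex.exp (t * φ x * I) * H₀ (φ x)) := by
      refine setIntegral_congr_fun measurableSet_Ioi fun x hx => ?_
      rw [← mul_smul_comm, hkey x hx]
    rw [step1, ← integral_image_eq_integral_abs_deriv_smul measurableSet_Ioi hderiv hinj
      (fun u => Complex.exp (t * u * I) * H₀ u), himg]
    rw [← integral_indicator measurableSet_Ioi]
    congr 1
    ext u
    rw [hH, indicator_apply, indicator_apply]
    split_ifs <;> simp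
  have := RL1 H
  refine this.congr fun t => (hint_eq t).symm

lemma oneD (a : ℝ) (ha : 0 < a) (h : ℝ → ℂ) (hh : Integrable h) :
    Tendsto (fun t : ℝ => ∫ x : ℝ,
      Complex.exp (t * Real.sqrt (x ^ 2 + a ^ 2) * I) * h x) (cocompact ℝ) (nhds 0) := by
  have hexpint : ∀ t : ℝ, Integrable (fun x : ℝ => Complex.exp (t * Real.sqrt (x ^ 2 + a ^ 2) * I) * h x) := by
    intro t
    refine hh.bdd_mul (c := 1) ?_ (Eventually.of_forall fun x => ?_)
    · exact (Complex.continuous_exp.comp (by continuity)).aestronglyMeasurable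
    · rw [show (t : ℂ) * (Real.sqrt (x ^ 2 + a ^ 2) : ℂ) * I = ((t * Real.sqrt (x ^ 2 + a ^ 2) : ℝ) : ℂ) * I by push_cast; ring]
      rw [Complex.norm_exp_ofReal_mul_I]
  have hsplit : ∀ t : ℝ, (∫ x : ℝ, Complex.exp (t * Real.sqrt (x ^ 2 + a ^ 2) * I) * h x)
      = (∫ x in Ioi (0:ℝ), Complex.exp (t * Real.sqrt (x ^ 2 + a ^ 2) * I) * h (-x))
        + ∫ x in Ioi (0:ℝ), Complex.exp (t * Real.sqrt (x ^ 2 + a ^ 2) * I) * h x := by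
    intro t
    have hIic : (∫ x in Iic (0:ℝ), Complex.exp (t * Real.sqrt (x ^ 2 + a ^ 2) * I) * h x)
        = ∫ x in Ioi (0:ℝ), Complex.exp (t * Real.sqrt (x ^ 2 + a ^ 2) * I) * h (-x) := by
      have h0 := integral_comp_neg_Ioi (0:ℝ) (fun x => Complex.exp (t * Real.sqrt (x ^ 2 + a ^ 2) * I) * h x)
      rw [neg_zero] at h0
      rw [← h0]
      refine setIntegral_congr_fun measurableSet_Ioi fun x hx => ?_
      rw [show (-x) ^ 2 = x ^ 2 by ring]
    rw [← intervalIntegral.integral_Iic_add_Ioi ((hexpint t).integrableOn) ((hexpint t).integrableOn), hIic]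
  have h1 := oneD_half a ha (fun x => h (-x)) (hh.comp_neg.integrableOn)
  have h2 := oneD_half a ha h hh.integrableOn
  have := h1.add h2
  rw [add_zero] at this
  exact this.congr fun t => (hsplit t).symm

lemma threeD (m : ℝ) (hm : 0 < m) (f : EuclideanSpace ℝ (Fin 3) → ℂ) (hf : Integrable f) :
    Tendsto (fun t : ℝ => ∫ k : EuclideanSpace ℝ (Fin 3),
      Complex.exp (t * omegaKG m k * I) * f k) (cocompact ℝ) (nhds 0) := by
  haveI := cocompactCG
  set e := (MeasurableEquiv.toLp 2 (Fin 3 → ℝ)).symm with he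
  set π := MeasurableEquiv.piFinSuccAbove (fun _ : Fin 3 => ℝ) 0 with hπdef
  have MP2 : MeasurePreserving π volume
      ((volume : Measure ℝ).prod (volume : Measure (Fin 2 → ℝ))) := by
    rw [show (volume : Measure (Fin 3 → ℝ)) = Measure.pi fun _ => volume from volume_pi,
      show (volume : Measure (Fin 2 → ℝ)) = Measure.pi fun _ => volume from volume_pi]
    exact measurePreserving_piFinSuccAbove (fun _ : Fin 3 => (volume : Measure ℝ)) 0
  set ψ : ℝ × (Fin 2 → ℝ) → EuclideanSpace ℝ (Fin 3) := fun p => e.symm (π.symm p) with hψ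
  have MPψ : MeasurePreserving ψ ((volume : Measure ℝ).prod volume) volume :=
    ((EuclideanSpace.volume_preserving_symm_measurableEquiv_toLp (Fin 3)).symm).comp MP2.symm
  have MEψ : MeasurableEmbedding ψ :=
    (e.symm.measurableEmbedding).comp (π.symm.measurableEmbedding)
  set a : (Fin 2 → ℝ) → ℝ := fun y => Real.sqrt (∑ j, y j ^ 2 + m ^ 2) with ha
  have hsumnn : ∀ y : Fin 2 → ℝ, (0:ℝ) ≤ ∑ j, y j ^ 2 :=
    fun y => Finset.sum_nonneg fun j _ => sq_nonneg _
  have hapos : ∀ y, 0 < a y := by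
    intro y
    apply Real.sqrt_pos.2
    nlinarith [hsumnn y]
  have hasq : ∀ y, a y ^ 2 = ∑ j, y j ^ 2 + m ^ 2 := by
    intro y
    apply Real.sq_sqrt
    nlinarith [hsumnn y]
  have hψcoord : ∀ (p : ℝ × (Fin 2 → ℝ)),
      (ψ p 0 = p.1) ∧ ∀ j : Fin 2, ψ p (Fin.succ j) = p.2 j := by
    intro p
    have h1 : (π.symm p : Fin 3 → ℝ) = Fin.cons p.1 p.2 := by
      simp [hπdef, MeasurableEquiv.piFinSuccAbove]
      rfl
    constructor
    · show (π.symm p : Fin 3 → ℝ) 0 = p.1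
      rw [h1, Fin.cons_zero]
    · intro j
      show (π.symm p : Fin 3 → ℝ) (Fin.succ j) = p.2 j
      rw [h1, Fin.cons_succ]
  have hω : ∀ p : ℝ × (Fin 2 → ℝ),
      omegaKG m (ψ p) = Real.sqrt (p.1 ^ 2 + a p.2 ^ 2) := by
    intro p
    rw [omegaKG, EuclideanSpace.norm_eq]
    rw [Real.sq_sqrt (Finset.sum_nonneg fun i _ => sq_nonneg _)]
    congr 1
    rw [hasq]
    have : ∀ i : Fin 3, ‖ψ p i‖ ^ 2 = (ψ p i) ^ 2 := fun i => by
      rw [Real.norm_eq_abs, _root_.sq_abs]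
    simp only [this]
    rw [Fin.sum_univ_succ]
    rw [(hψcoord p).1]
    have : ∀ j : Fin 2, ψ p (Fin.succ j) ^ 2 = p.2 j ^ 2 := fun j => by rw [(hψcoord p).2 j]
    simp only [this]
    ring
  set h : ℝ × (Fin 2 → ℝ) → ℂ := fun p => f (ψ p) with hh
  have hInt : Integrable h ((volume : Measure ℝ).prod volume) :=
    (MPψ.integrable_comp_emb MEψ).2 hf
  have hacont : Continuous a := by
    apply Real.continuous_sqrt.comp
    exact (continuous_finset_sum _ fun j _ => (continuous_apply j).pow 2).add continuous_const
  -- integrand over the product space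
  set G : ℝ → ℝ × (Fin 2 → ℝ) → ℂ :=
    fun t p => Complex.exp (t * Real.sqrt (p.1 ^ 2 + a p.2 ^ 2) * I) * h p with hG
  have hGint : ∀ t, Integrable (G t) ((volume : Measure ℝ).prod volume) := by
    intro t
    refine hInt.bdd_mul (c := 1) ?_ (Eventually.of_forall fun p => ?_)
    · refine (Complex.continuous_exp.comp ?_).aestronglyMeasurable
      apply Continuous.mul (Continuous.mul continuous_const ?_) continuous_const
      exact Complex.continuous_ofReal.comp
        (Real.continuous_sqrt.comp ((continuous_fst.pow 2).add ((hacont.comp continuous_snd).pow 2)))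
    · rw [show (t : ℂ) * (Real.sqrt (p.1 ^ 2 + a p.2 ^ 2) : ℂ) * I
          = ((t * Real.sqrt (p.1 ^ 2 + a p.2 ^ 2) : ℝ) : ℂ) * I by push_cast; ring]
      rw [Complex.norm_exp_ofReal_mul_I]
  have hchain : ∀ t : ℝ, (∫ k : EuclideanSpace ℝ (Fin 3), Complex.exp (t * omegaKG m k * I) * f k)
      = ∫ y : Fin 2 → ℝ, ∫ x : ℝ, G t (x, y) := by
    intro t
    rw [← MPψ.integral_comp MEψ (fun k => Complex.exp (t * omegaKG m k * I) * f k)]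
    rw [show (fun p => Complex.exp (t * omegaKG m (ψ p) * I) * f (ψ p)) = G t by
      funext p; rw [hG]; simp only [hω p, hh]]
    exact integral_prod_symm (G t) (hGint t)
  -- dominated convergence
  have hswap : Integrable (h ∘ Prod.swap) ((volume : Measure (Fin 2 → ℝ)).prod volume) :=
    hInt.swap
  have bound_int : Integrable (fun y : Fin 2 → ℝ => ∫ x : ℝ, ‖h (x, y)‖) :=
    hswap.integral_norm_prod_left
  have hmeas : ∀ᶠ t : ℝ in cocompact ℝ, AEStronglyMeasurable
      (fun y : Fin 2 → ℝ => ∫ x : ℝ, G t (x, y)) (volume : Measure (Fin 2 → ℝ)) := by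
    refine Eventually.of_forall fun t => ?_
    have : AEStronglyMeasurable (G t ∘ Prod.swap)
        ((volume : Measure (Fin 2 → ℝ)).prod volume) :=
      (hGint t).aestronglyMeasurable.comp_measurePreserving Measure.measurePreserving_swap
    exact this.integral_prod_right'
  have hbd : ∀ᶠ t : ℝ in cocompact ℝ, ∀ᵐ y : Fin 2 → ℝ,
      ‖∫ x : ℝ, G t (x, y)‖ ≤ ∫ x : ℝ, ‖h (x, y)‖ := by
    refine Eventually.of_forall fun t => Eventually.of_forall fun y => ?_
    refine (norm_integral_le_integral_norm _).trans (le_of_eq ?_)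
    refine integral_congr_ae (Eventually.of_forall fun x => ?_)
    rw [hG]
    simp only [norm_mul]
    rw [show (t : ℂ) * (Real.sqrt (x ^ 2 + a y ^ 2) : ℂ) * I
          = ((t * Real.sqrt (x ^ 2 + a y ^ 2) : ℝ) : ℂ) * I by push_cast; ring]
    rw [Complex.norm_exp_ofReal_mul_I, one_mul]
  have hlim : ∀ᵐ y : Fin 2 → ℝ, Tendsto (fun t : ℝ => ∫ x : ℝ, G t (x, y))
      (cocompact ℝ) (nhds 0) := by
    filter_upwards [hswap.prod_right_ae] with y hy
    exact oneD (a y) (hapos y) (fun x => h (x, y)) hy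
  have := tendsto_integral_filter_of_dominated_convergence
    (fun y : Fin 2 → ℝ => ∫ x : ℝ, ‖h (x, y)‖) hmeas hbd bound_int hlim
  rw [integral_zero] at this
  exact this.congr fun t => (hchain t).symm

lemma omegaKG_pos (m : ℝ) (hm : 0 < m) (k : EuclideanSpace ℝ (Fin 3)) : 0 < omegaKG m k := by
  apply Real.sqrt_pos.2
  nlinarith [sq_nonneg ‖k‖]

lemma omegaKG_ge (m : ℝ) (hm : 0 < m) (k : EuclideanSpace ℝ (Fin 3)) : m ≤ omegaKG m k := by
  rw [show m = Real.sqrt (m ^ 2) from (Real.sqrt_sq hm.le).symm, omegaKG,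
    Real.sqrt_sq hm.le]
  nth_rewrite 1 [show m = Real.sqrt (m ^ 2) from (Real.sqrt_sq hm.le).symm]
  exact Real.sqrt_le_sqrt (by nlinarith [sq_nonneg ‖k‖])

lemma omegaKG_cont (m : ℝ) : Continuous (omegaKG m) :=
  Real.continuous_sqrt.comp (((continuous_norm).pow 2).add continuous_const)

lemma tendsto_two_mul_atTop : Tendsto (fun t : ℝ => 2 * t) atTop atTop :=
  Tendsto.const_mul_atTop (by norm_num : (0:ℝ) < 2) tendsto_id

lemma tendsto_two_mul_cocompact : Tendsto (fun t : ℝ => 2 * t) atTop (cocompact ℝ) := by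
  rw [cocompact_eq_atBot_atTop]
  exact tendsto_two_mul_atTop.mono_right le_sup_right

lemma tendsto_neg_two_mul_cocompact : Tendsto (fun t : ℝ => -(2 * t)) atTop (cocompact ℝ) := by
  rw [cocompact_eq_atBot_atTop]
  exact (tendsto_neg_atTop_atBot.comp tendsto_two_mul_atTop).mono_right le_sup_left

end Aux

/-- Riemann–Lebesgue-type decay for Klein–Gordon oscillations: for `m > 0` and `g ∈ L¹(ℝ³,ℂ)`,
for each fixed `z ∈ ℝ³` the integrals `∫ e^{−ik·z} cos(2ω(k)t) g(k) dk` and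
`∫ e^{−ik·z} (sin(2ω(k)t)/ω(k)) g(k) dk` tend to `0` as `t → ∞`. -/
theorem kleinGordon_riemann_lebesgue (m : ℝ) (hm : 0 < m)
    (g : EuclideanSpace ℝ (Fin 3) → ℂ) (hg : MeasureTheory.Integrable g)
    (z : EuclideanSpace ℝ (Fin 3)) :
    Tendsto (fun t : ℝ => ∫ k : EuclideanSpace ℝ (Fin 3),
        Complex.exp (-(I * (⟪k, z⟫ : ℝ))) * (Real.cos (2 * omegaKG m k * t) : ℂ) * g k)
      atTop (nhds 0) ∧
    Tendsto (fun t : ℝ => ∫ k : EuclideanSpace ℝ (Fin 3),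
        Complex.exp (-(I * (⟪k, z⟫ : ℝ))) *
          ((Real.sin (2 * omegaKG m k * t) / omegaKG m k : ℝ) : ℂ) * g k)
      atTop (nhds 0) := by
  open MeasureTheory Set in
  set ω := omegaKG m with hωdef
  set f : EuclideanSpace ℝ (Fin 3) → ℂ := fun k => Complex.exp (-(I * (⟪k, z⟫ : ℝ))) * g k
    with hfdef
  have hcont_inner : Continuous fun k : EuclideanSpace ℝ (Fin 3) => (⟪k, z⟫ : ℝ) :=
    Continuous.inner continuous_id continuous_const
  have hcexp : Continuous fun k : EuclideanSpace ℝ (Fin 3) =>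
      Complex.exp (-(I * ((⟪k, z⟫ : ℝ) : ℂ))) :=
    Complex.continuous_exp.comp
      ((continuous_const.mul (Complex.continuous_ofReal.comp hcont_inner)).neg)
  have hexp_norm : ∀ k : EuclideanSpace ℝ (Fin 3),
      ‖Complex.exp (-(I * ((⟪k, z⟫ : ℝ) : ℂ)))‖ = 1 := by
    intro k
    rw [Complex.norm_exp]
    simp
  have hf : MeasureTheory.Integrable f :=
    hg.bdd_mul hcexp.aestronglyMeasurable (Eventually.of_forall fun k => le_of_eq (hexp_norm k))
  set f₂ : EuclideanSpace ℝ (Fin 3) → ℂ := fun k => (((ω k)⁻¹ : ℝ) : ℂ) * f k with hf₂def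
  have hf₂ : MeasureTheory.Integrable f₂ := by
    refine hf.bdd_mul (c := m⁻¹) ?_ (Eventually.of_forall fun k => ?_)
    · exact (Complex.continuous_ofReal.comp
        ((omegaKG_cont m).inv₀ fun k => (omegaKG_pos m hm k).ne')).aestronglyMeasurable
    · rw [Complex.norm_real, Real.norm_eq_abs, abs_of_pos (inv_pos.2 (omegaKG_pos m hm k))]
      exact inv_anti₀ hm (omegaKG_ge m hm k)
  have hKexp : ∀ (s : ℝ) (F : EuclideanSpace ℝ (Fin 3) → ℂ), MeasureTheory.Integrable F →
      MeasureTheory.Integrable (fun k => Complex.exp (s * ω k * I) * F k) := by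
    intro s F hF
    refine hF.bdd_mul (c := 1) ?_ (Eventually.of_forall fun k => ?_)
    · refine (Complex.continuous_exp.comp ?_).aestronglyMeasurable
      exact (continuous_const.mul (Complex.continuous_ofReal.comp (omegaKG_cont m))).mul
        continuous_const
    · rw [show (s:ℂ) * (ω k : ℂ) * I = ((s * ω k : ℝ):ℂ) * I by push_cast; ring,
        Complex.norm_exp_ofReal_mul_I]
  have K1 := threeD m hm f hf
  have K2 := threeD m hm f₂ hf₂
  constructor
  · have hpt : ∀ (t : ℝ) (k : EuclideanSpace ℝ (Fin 3)),
        Complex.exp (-(I * (⟪k, z⟫ : ℝ))) * (Real.cos (2 * ω k * t) : ℂ) * g k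
          = (Complex.exp (((2*t : ℝ) : ℂ) * ω k * I) * f k
            + Complex.exp (((-(2*t) : ℝ) : ℂ) * ω k * I) * f k) / 2 := by
      intro t k
      rw [cosid (2 * ω k * t)]
      rw [show ((2 * ω k * t : ℝ) : ℂ) * I = ((2*t : ℝ):ℂ) * (ω k : ℂ) * I by push_cast; ring,
        show -((2 * ω k * t : ℝ) : ℂ) * I = ((-(2*t) : ℝ):ℂ) * (ω k : ℂ) * I by push_cast; ring]
      rw [hfdef]
      ring
    have hint : ∀ t : ℝ, (∫ k : EuclideanSpace ℝ (Fin 3),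
          Complex.exp (-(I * (⟪k, z⟫ : ℝ))) * (Real.cos (2 * ω k * t) : ℂ) * g k)
        = ((∫ k : EuclideanSpace ℝ (Fin 3), Complex.exp (((2*t:ℝ):ℂ) * ω k * I) * f k)
          + (∫ k : EuclideanSpace ℝ (Fin 3), Complex.exp (((-(2*t):ℝ):ℂ) * ω k * I) * f k)) / 2 := by
      intro t
      rw [← MeasureTheory.integral_add (hKexp (2*t) f hf) (hKexp (-(2*t)) f hf),
        ← MeasureTheory.integral_div]
      exact MeasureTheory.integral_congr_ae (Filter.Eventually.of_forall fun k => hpt t k)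
    have T1 := K1.comp tendsto_two_mul_cocompact
    have T2 := K1.comp tendsto_neg_two_mul_cocompact
    have T := (T1.add T2).div_const 2
    rw [show ((0:ℂ)+0)/2 = 0 by norm_num] at T
    exact T.congr fun t => (hint t).symm
  · have hpt : ∀ (t : ℝ) (k : EuclideanSpace ℝ (Fin 3)),
        Complex.exp (-(I * (⟪k, z⟫ : ℝ))) * ((Real.sin (2 * ω k * t) / ω k : ℝ) : ℂ) * g k
          = (Complex.exp (((2*t : ℝ) : ℂ) * ω k * I) * f₂ k
            - Complex.exp (((-(2*t) : ℝ) : ℂ) * ω k * I) * f₂ k) / (2 * I) := by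
      intro t k
      have hων : ((ω k : ℝ) : ℂ) ≠ 0 := Complex.ofReal_ne_zero.2 (omegaKG_pos m hm k).ne'
      rw [Complex.ofReal_div, sinid (2 * ω k * t)]
      rw [show ((2 * ω k * t : ℝ) : ℂ) * I = ((2*t : ℝ):ℂ) * (ω k : ℂ) * I by push_cast; ring,
        show -((2 * ω k * t : ℝ) : ℂ) * I = ((-(2*t) : ℝ):ℂ) * (ω k : ℂ) * I by push_cast; ring]
      rw [hf₂def, hfdef]
      push_cast
      field_simp
    have hint : ∀ t : ℝ, (∫ k : EuclideanSpace ℝ (Fin 3),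
          Complex.exp (-(I * (⟪k, z⟫ : ℝ))) * ((Real.sin (2 * ω k * t) / ω k : ℝ) : ℂ) * g k)
        = ((∫ k : EuclideanSpace ℝ (Fin 3), Complex.exp (((2*t:ℝ):ℂ) * ω k * I) * f₂ k)
          - (∫ k : EuclideanSpace ℝ (Fin 3), Complex.exp (((-(2*t):ℝ):ℂ) * ω k * I) * f₂ k)) / (2 * I) := by
      intro t
      rw [← MeasureTheory.integral_sub (hKexp (2*t) f₂ hf₂) (hKexp (-(2*t)) f₂ hf₂),
        ← MeasureTheory.integral_div]
      exact MeasureTheory.integral_congr_ae (Filter.Eventually.of_forall fun k => hpt t k)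
    have T1 := K2.comp tendsto_two_mul_cocompact
    have T2 := K2.comp tendsto_neg_two_mul_cocompact
    have T := (T1.sub T2).div_const (2 * I)
    rw [show ((0:ℂ)-0)/(2*I) = 0 by norm_num] at T
    exact T.congr fun t => (hint t).symm
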